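/- arXiv:1108.5448 — 4 statements merged into one kernel-verified Lean document; each statement's English description precedes it below -/
import Mathlib

section
/- Let V be a total valuation ring of a division ring K, let σ be an automorphism of K with σ(V) = V, and let T = V + K[x,σ]x be the subring of the skew polynomial ring K[x,σ] consisting of skew polynomials with constant term in V. For a two-sided ideal I of T the following are equivalent: (1) I ∩ V ≠ 0; (2) I properly contains K[x,σ]x; (3) I·K[x,σ] = K[x,σ]. Moreover, if any of these conditions holds, then I = (I ∩ V) + K[x,σ]x = (I ∩ V)·T. -/
namespace Paper

variable {Q : Type*} [Ring Q]

/-- `I` is a right `S`-submodule of `Q` (an additive subgroup closed under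
right multiplication by elements of `S`). -/
def IsRightSubmodule (S I : Set Q) : Prop :=
  (0 : Q) ∈ I ∧ (∀ x ∈ I, ∀ y ∈ I, x + y ∈ I) ∧ (∀ x ∈ I, -x ∈ I) ∧
    ∀ x ∈ I, ∀ s ∈ S, x * s ∈ I

/-- `I` is a left `S`-submodule of `Q`. -/
def IsLeftSubmodule (S I : Set Q) : Prop :=
  (0 : Q) ∈ I ∧ (∀ x ∈ I, ∀ y ∈ I, x + y ∈ I) ∧ (∀ x ∈ I, -x ∈ I) ∧
    ∀ x ∈ I, ∀ s ∈ S, s * x ∈ I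

/-- A right `S`-ideal of `Q`: a right `S`-submodule of `Q` containing a regular
element of `S` and such that `u • I ⊆ S` for some unit `u` of `Q`. -/
def IsRightIdealOfOrder (S I : Set Q) : Prop :=
  IsRightSubmodule S I ∧ (∃ a ∈ I, a ∈ S ∧ a ∈ nonZeroDivisors Q) ∧
    ∃ u : Q, IsUnit u ∧ ∀ x ∈ I, u * x ∈ S

/-- A left `S`-ideal of `Q`. -/
def IsLeftIdealOfOrder (S I : Set Q) : Prop :=
  IsLeftSubmodule S I ∧ (∃ a ∈ I, a ∈ S ∧ a ∈ nonZeroDivisors Q) ∧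
    ∃ u : Q, IsUnit u ∧ ∀ x ∈ I, x * u ∈ S

/-- `(A : B)_r = {q ∈ Q : q B ⊆ A}`. -/
def colonR (A B : Set Q) : Set Q := {q | ∀ b ∈ B, q * b ∈ A}

/-- `(A : B)_l = {q ∈ Q : B q ⊆ A}`. -/
def colonL (A B : Set Q) : Set Q := {q | ∀ b ∈ B, b * q ∈ A}

/-- The `ν`-operation on right `S`-ideals: `I_ν = (S : (S : I)_l)_r`. -/
def nuR (S I : Set Q) : Set Q := colonR S (colonL S I)

/-- The `ν`-operation on left `S`-ideals: `_νJ = (S : (S : J)_r)_l`. -/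
def nuL (S J : Set Q) : Set Q := colonL S (colonR S J)

/-- The right `S`-module generated by `a 0, …, a (n-1)`. -/
def rightSpan (S : Set Q) {n : ℕ} (a : Fin n → Q) : Set Q :=
  {q | ∃ s : Fin n → Q, (∀ i, s i ∈ S) ∧ q = ∑ i, a i * s i}

/-- `F` is finitely generated as a right `S`-module. -/
def IsFGRight (S F : Set Q) : Prop := ∃ (n : ℕ) (a : Fin n → Q), F = rightSpan S a

/-- The left `S`-module generated by `a 0, …, a (n-1)`. -/
def leftSpan (S : Set Q) {n : ℕ} (a : Fin n → Q) : Set Q :=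
  {q | ∃ s : Fin n → Q, (∀ i, s i ∈ S) ∧ q = ∑ i, s i * a i}

/-- `F` is finitely generated as a left `S`-module. -/
def IsFGLeft (S F : Set Q) : Prop := ∃ (n : ℕ) (a : Fin n → Q), F = leftSpan S a

/-- The `τ`-operation (the finite-type operation associated to `ν`):
`I^τ` is the union of `F_ν` over all finitely generated right `S`-ideals `F ⊆ I`. -/
def tauR (S I : Set Q) : Set Q :=
  {q | ∃ F : Set Q, IsRightIdealOfOrder S F ∧ IsFGRight S F ∧ F ⊆ I ∧ q ∈ nuR S F}

/-- The left-handed `τ`-operation. -/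
def tauL (S I : Set Q) : Set Q :=
  {q | ∃ F : Set Q, IsLeftIdealOfOrder S F ∧ IsFGLeft S F ∧ F ⊆ I ∧ q ∈ nuL S F}

/-- `S` is an order in `Q`: a subring such that every regular element of `S` is a unit
of `Q` and every element of `Q` is both a right fraction and a left fraction over `S`
(by Goldie's theorem, for `Q` simple Artinian this says exactly that `S` is a prime
Goldie ring with classical quotient ring `Q`). -/
def IsOrderIn (S : Set Q) : Prop :=
  (∃ R : Subring Q, (R : Set Q) = S) ∧
  (∀ s ∈ S, s ∈ nonZeroDivisors Q → IsUnit s) ∧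
  (∀ q : Q, ∃ a ∈ S, ∃ s ∈ S, IsUnit s ∧ q * s = a) ∧
  (∀ q : Q, ∃ b ∈ S, ∃ t ∈ S, IsUnit t ∧ t * q = b)

/-- The principal right `S`-module `qS`. -/
def principalRight (S : Set Q) (q : Q) : Set Q := {x | ∃ s ∈ S, x = q * s}

/-- The principal left `S`-module `Sq`. -/
def principalLeft (S : Set Q) (q : Q) : Set Q := {x | ∃ s ∈ S, x = s * q}

/-- `S` is a right `ν`-Bezout order: `I_ν` is right principal for every finitely
generated integral right `S`-ideal `I`. -/
def IsRightNuBezout (S : Set Q) : Prop :=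
  ∀ I : Set Q, IsRightIdealOfOrder S I → IsFGRight S I → I ⊆ S →
    ∃ q : Q, nuR S I = principalRight S q

/-- `S` is a left `ν`-Bezout order. -/
def IsLeftNuBezout (S : Set Q) : Prop :=
  ∀ I : Set Q, IsLeftIdealOfOrder S I → IsFGLeft S I → I ⊆ S →
    ∃ q : Q, nuL S I = principalLeft S q

/-- A `ν`-Bezout order: an order which is right and left `ν`-Bezout. -/
def IsNuBezoutOrder (S : Set Q) : Prop := IsOrderIn S ∧ IsRightNuBezout S ∧ IsLeftNuBezout S

/-- `S` is a right Bezout order: every finitely generated right ideal of `S`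
is principal. -/
def IsRightBezout (S : Set Q) : Prop :=
  ∀ I : Set Q, I ⊆ S → IsRightSubmodule S I → IsFGRight S I →
    ∃ q : Q, I = principalRight S q

/-- `S` is a left Bezout order. -/
def IsLeftBezout (S : Set Q) : Prop :=
  ∀ I : Set Q, I ⊆ S → IsLeftSubmodule S I → IsFGLeft S I →
    ∃ q : Q, I = principalLeft S q

/-- A Bezout order: an order which is right and left Bezout. -/
def IsBezoutOrder (S : Set Q) : Prop := IsOrderIn S ∧ IsRightBezout S ∧ IsLeftBezout S

/-- `b` is a right-divisor of `a` (in `S`): `a = b * s` for some `s ∈ S`. -/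
def IsRightDivisor (S : Set Q) (b a : Q) : Prop := ∃ s ∈ S, a = b * s

/-- `b` is a left-divisor of `a` (in `S`): `a = s * b` for some `s ∈ S`. -/
def IsLeftDivisor (S : Set Q) (b a : Q) : Prop := ∃ s ∈ S, a = s * b

/-- `d` is a left greatest common divisor of `a` and `b`. -/
def IsLGCD (S : Set Q) (a b d : Q) : Prop :=
  IsLeftDivisor S d a ∧ IsLeftDivisor S d b ∧
    ∀ c : Q, IsLeftDivisor S c a → IsLeftDivisor S c b → IsLeftDivisor S c d

/-- `d` is a right greatest common divisor of `a` and `b`. -/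
def IsRGCD (S : Set Q) (a b d : Q) : Prop :=
  IsRightDivisor S d a ∧ IsRightDivisor S d b ∧
    ∀ c : Q, IsRightDivisor S c a → IsRightDivisor S c b → IsRightDivisor S c d

/-- `P` is a two-sided ideal of (the ring) `S`. -/
def IsTwoSidedIdealOf (S P : Set Q) : Prop :=
  P ⊆ S ∧ (0 : Q) ∈ P ∧ (∀ x ∈ P, ∀ y ∈ P, x + y ∈ P) ∧ (∀ x ∈ P, -x ∈ P) ∧
    ∀ x ∈ P, ∀ s ∈ S, x * s ∈ P ∧ s * x ∈ P

/-- `P` is a completely prime (proper, two-sided) ideal of `S`. -/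
def IsCompletelyPrimeIdealOf (S P : Set Q) : Prop :=
  IsTwoSidedIdealOf S P ∧ (1 : Q) ∉ P ∧ ∀ a ∈ S, ∀ b ∈ S, a * b ∈ P → a ∈ P ∨ b ∈ P

/-- `P` is a left PF-prime ideal: every `l`-gcd of two nonzero elements of `P`
lies in `P`. -/
def IsLeftPFPrime (S P : Set Q) : Prop :=
  ∀ a ∈ P, ∀ b ∈ P, a ≠ 0 → b ≠ 0 → ∀ d : Q, IsLGCD S a b d → d ∈ P

/-- `S` is localizable at `P`: `S ∖ P` is a left and right Ore set consisting of
regular elements. -/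
def IsLocalizableAt (S P : Set Q) : Prop :=
  (∀ s ∈ S, s ∉ P → s ∈ nonZeroDivisors Q) ∧
  (∀ a ∈ S, ∀ s ∈ S, s ∉ P → ∃ b ∈ S, ∃ t ∈ S, t ∉ P ∧ a * t = s * b) ∧
  (∀ a ∈ S, ∀ s ∈ S, s ∉ P → ∃ b ∈ S, ∃ t ∈ S, t ∉ P ∧ t * a = b * s)

/-- The localization `S_P = {t s⁻¹ : t ∈ S, s ∈ S ∖ P}`, described as the set of
`x` with `x * s ∈ S` for some `s ∈ S ∖ P` witnessing `x * s = t`. -/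
def localizationAt (S P : Set Q) : Set Q :=
  {x | ∃ t ∈ S, ∃ s ∈ S, s ∉ P ∧ x * s = t}

/-- Finite sums of products `a * b` with `a ∈ A`, `b ∈ B` (the product of the
additive subgroups `A` and `B`). -/
def setMul (A B : Set Q) : Set Q :=
  {q | ∃ (n : ℕ) (x y : Fin n → Q), (∀ i, x i ∈ A ∧ y i ∈ B) ∧ q = ∑ i, x i * y i}

/-- The sum `Σ_α F_α` of a family of subsets of `Q` (finite sums of elements of
the members of the family). -/
def famSum {ι : Sort*} (F : ι → Set Q) : Set Q :=
  {q | ∃ (n : ℕ) (g : Fin n → Q), (∀ i, ∃ α, g i ∈ F α) ∧ q = ∑ i, g i}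

/-- `O_l(I) = {q ∈ Q : q I ⊆ I}`. -/
def Ol (I : Set Q) : Set Q := {q | ∀ x ∈ I, q * x ∈ I}

/-- `O_r(I) = {q ∈ Q : I q ⊆ I}`. -/
def Or' (I : Set Q) : Set Q := {q | ∀ x ∈ I, x * q ∈ I}

/-- A star operation on the order `S`: a map on right `S`-ideals (extended
arbitrarily to all subsets) satisfying `S* = S`, `(uI)* = u I*`, monotonicity,
extensivity and idempotence. -/
structure IsStarOp (S : Set Q) (star : Set Q → Set Q) : Prop where
  mapsTo : ∀ I : Set Q, IsRightIdealOfOrder S I → IsRightIdealOfOrder S (star I)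
  star_self : star S = S
  smul_star : ∀ u : Q, IsUnit u → ∀ I : Set Q, IsRightIdealOfOrder S I →
    star {x | ∃ y ∈ I, x = u * y} = {x | ∃ y ∈ star I, x = u * y}
  mono : ∀ I J : Set Q, IsRightIdealOfOrder S I → IsRightIdealOfOrder S J →
    I ⊆ J → star I ⊆ star J
  subset_star : ∀ I : Set Q, IsRightIdealOfOrder S I → I ⊆ star I
  idem : ∀ I : Set Q, IsRightIdealOfOrder S I → star (star I) = star I

/-- A semistar operation on the order `S`: a map on nonzero right `S`-submodules
of `Q` (extended arbitrarily to all subsets) satisfying `(uI)* = u I*`,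
monotonicity, extensivity and idempotence. -/
structure IsSemistarOp (S : Set Q) (star : Set Q → Set Q) : Prop where
  mapsTo : ∀ I : Set Q, IsRightSubmodule S I → I ≠ {0} →
    IsRightSubmodule S (star I) ∧ star I ≠ {0}
  smul_star : ∀ u : Q, IsUnit u → ∀ I : Set Q, IsRightSubmodule S I → I ≠ {0} →
    star {x | ∃ y ∈ I, x = u * y} = {x | ∃ y ∈ star I, x = u * y}
  mono : ∀ I J : Set Q, IsRightSubmodule S I → I ≠ {0} → IsRightSubmodule S J →
    J ≠ {0} → I ⊆ J → star I ⊆ star J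
  subset_star : ∀ I : Set Q, IsRightSubmodule S I → I ≠ {0} → I ⊆ star I
  idem : ∀ I : Set Q, IsRightSubmodule S I → I ≠ {0} → star (star I) = star I

/-- Ascending chain condition on the collection of sets satisfying `P`. -/
def ACCOn {α : Type*} (P : Set α → Prop) : Prop :=
  ∀ f : ℕ → Set α, (∀ n, P (f n)) → (∀ n, f n ⊆ f (n + 1)) →
    ∃ N : ℕ, ∀ n : ℕ, N ≤ n → f n = f N

/-- `S` is a right Prüfer order: `(S : I)_l I = S` and `I (S : I)_l = O_l(I)` for
every finitely generated right `S`-ideal `I`. -/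
def IsRightPruferOrder (S : Set Q) : Prop :=
  ∀ I : Set Q, IsRightIdealOfOrder S I → IsFGRight S I →
    setMul (colonL S I) I = S ∧ setMul I (colonL S I) = Ol I

/-- `S` is a left Prüfer order. -/
def IsLeftPruferOrder (S : Set Q) : Prop :=
  ∀ J : Set Q, IsLeftIdealOfOrder S J → IsFGLeft S J →
    setMul J (colonR S J) = S ∧ setMul (colonR S J) J = Or' J

/-- A Prüfer order: right and left Prüfer. -/
def IsPruferOrder (S : Set Q) : Prop := IsRightPruferOrder S ∧ IsLeftPruferOrder S

/-- `I ∈ H_r(S)`: `I` is a right `ν`-ideal of finite type, i.e. `I = J_ν` for some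
finitely generated right `S`-ideal `J`. -/
def HrMem (S I : Set Q) : Prop :=
  IsRightIdealOfOrder S I ∧
    ∃ J : Set Q, IsRightIdealOfOrder S J ∧ IsFGRight S J ∧ I = nuR S J

/-- `S` is a right Prüfer `ν`-multiplication order:
`((S:I)_l I)^τ = S` and `(I (S:I)_l)^τ = O_l(I)` for every `I ∈ H_r(S)`. -/
def IsRightPruferNuMultOrder (S : Set Q) : Prop :=
  ∀ I : Set Q, HrMem S I →
    tauR S (setMul (colonL S I) I) = S ∧ tauR S (setMul I (colonL S I)) = Ol I

/-- The Jacobson radical of the subring `R` of `Q`, viewed as a subset of `Q`: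
the set of `x ∈ R` such that `1 - y * x` is invertible in `R` for all `y ∈ R`. -/
def jacobsonSet (R : Subring Q) : Set Q :=
  {x | x ∈ R ∧ ∀ y ∈ R, ∃ z ∈ R, z * (1 - y * x) = 1 ∧ (1 - y * x) * z = 1}

/-- `R` is a Dubrovin valuation ring of `Q`: `R/J(R)` is a simple Artinian ring and
for every `q ∈ Q ∖ R` there are `r, r' ∈ R` with `r * q ∈ R ∖ J(R)` and
`q * r' ∈ R ∖ J(R)`. -/
def IsDubrovinValuationRing (R : Subring Q) : Prop :=
  (∀ c : RingCon R, (∀ x y : R, c x y ↔ ((x : Q) - y) ∈ jacobsonSet R) →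
      IsSimpleRing c.Quotient ∧ IsArtinianRing c.Quotient) ∧
  (∀ q : Q, q ∉ R →
    (∃ r ∈ R, r * q ∈ R ∧ r * q ∉ jacobsonSet R) ∧
    (∃ r' ∈ R, q * r' ∈ R ∧ q * r' ∉ jacobsonSet R))

/-- A discrete Dubrovin valuation ring: a non-Artinian Dubrovin valuation ring of `Q`
which is maximal among the Dubrovin valuation rings of `Q` different from `Q`, and
with `J(S) ≠ J(S)²`. -/
def IsDiscreteDubrovin (S : Subring Q) : Prop :=
  IsDubrovinValuationRing S ∧ ¬ IsArtinianRing S ∧ S ≠ ⊤ ∧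
    (∀ R : Subring Q, IsDubrovinValuationRing R → R ≠ ⊤ → S ≤ R → R = S) ∧
    jacobsonSet S ≠ setMul (jacobsonSet S) (jacobsonSet S)

/-- `M` is a maximal (two-sided) ideal of `S`. -/
def IsMaximalIdealOf (S M : Set Q) : Prop :=
  IsTwoSidedIdealOf S M ∧ M ≠ S ∧
    ∀ N : Set Q, IsTwoSidedIdealOf S N → M ⊆ N → N = M ∨ N = S

/-- The elements of `S` regular modulo `M`. -/
def regModulo (S M : Set Q) : Set Q :=
  {s | s ∈ S ∧ ∀ a ∈ S, (s * a ∈ M → a ∈ M) ∧ (a * s ∈ M → a ∈ M)}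

/-- The localization of `S` at the maximal ideal `M`: the ring of quotients of `S`
with respect to the Ore set of elements of `S` regular modulo `M`. -/
def localizationAtMax (S M : Set Q) : Set Q :=
  {q | ∃ a ∈ S, ∃ s ∈ regModulo S M, q * s = a}

end Paper

section SkewPoly

/-- The skew polynomial ring `K[x,σ]` (Ore extension of the division ring `K` by the
automorphism `σ`), presented axiomatically: a ring `A` together with an embedding
`ι : K →+* A`, an element `X` with `X * ι a = ι (σ a) * X`, such that every element
of `A` is uniquely of the form `Σ ι (c i) * X ^ i` (with `coeff` producing the
coefficients). -/
structure SkewPolyRing (K : Type*) [DivisionRing K] (σ : K ≃+* K)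
    (A : Type*) [Ring A] where
  ι : K →+* A
  X : A
  coeff : A → (ℕ →₀ K)
  X_mul : ∀ a : K, X * ι a = ι (σ a) * X
  sum_coeff : ∀ f : A, ((coeff f).sum fun i a => ι a * X ^ i) = f
  coeff_sum : ∀ c : ℕ →₀ K, coeff (c.sum fun i a => ι a * X ^ i) = c

end SkewPoly

namespace SkewPolyRing

variable {K A : Type*} [DivisionRing K] [Ring A] {σ : K ≃+* K} (P : SkewPolyRing K σ A)

noncomputable def e (c : ℕ →₀ K) : A := c.sum fun i a => P.ι a * P.X ^ i

lemma e_coeff (f : A) : P.e (P.coeff f) = f := P.sum_coeff f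
lemma coeff_e (c : ℕ →₀ K) : P.coeff (P.e c) = c := P.coeff_sum c

lemma e_add (c d : ℕ →₀ K) : P.e (c + d) = P.e c + P.e d := by
  unfold e
  rw [Finsupp.sum_add_index]
  · intro i _; simp
  · intro i _ b₁ b₂; simp [add_mul]

lemma coeff_add' (f g : A) : P.coeff (f + g) = P.coeff f + P.coeff g := by
  conv_lhs => rw [← P.e_coeff f, ← P.e_coeff g, ← P.e_add]
  rw [P.coeff_e]

lemma e_zero : P.e 0 = 0 := Finsupp.sum_zero_index

lemma coeff_zero' : P.coeff 0 = 0 := by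
  rw [← P.e_zero, P.coeff_e]

/-- the constant-term map as an additive hom -/
noncomputable def pi : A →+ K where
  toFun f := P.coeff f 0
  map_zero' := by show P.coeff 0 0 = 0; rw [P.coeff_zero']; rfl
  map_add' f g := by show P.coeff (f+g) 0 = _; rw [P.coeff_add']; rfl

lemma e_single (i : ℕ) (a : K) : P.e (Finsupp.single i a) = P.ι a * P.X ^ i := by
  unfold e; rw [Finsupp.sum_single_index]; simp

lemma coeff_monomial (i : ℕ) (a : K) : P.coeff (P.ι a * P.X ^ i) = Finsupp.single i a := by
  rw [← P.e_single, P.coeff_e]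

lemma pi_monomial (i : ℕ) (a : K) : P.pi (P.ι a * P.X ^ i) = if i = 0 then a else 0 := by
  show P.coeff _ 0 = _
  rw [P.coeff_monomial, Finsupp.single_apply]

lemma pi_iota (a : K) : P.pi (P.ι a) = a := by
  have := P.pi_monomial 0 a
  simpa using this

lemma pi_iota_mul (c : K) (f : A) : P.pi (P.ι c * f) = c * P.pi f := by
  conv_lhs => rw [← P.e_coeff f]
  unfold e
  rw [Finsupp.mul_sum, map_finsuppSum]
  have : ∀ j d, P.pi (P.ι c * (P.ι d * P.X ^ j)) = c * P.pi (P.ι d * P.X ^ j) := by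
    intro j d
    rw [← mul_assoc, ← map_mul, P.pi_monomial, P.pi_monomial]
    split <;> simp
  calc ((P.coeff f).sum fun j d => P.pi (P.ι c * (P.ι d * P.X ^ j)))
      = (P.coeff f).sum fun j d => c * P.pi (P.ι d * P.X ^ j) :=
        Finsupp.sum_congr fun j _ => this j _
    _ = c * P.pi ((P.coeff f).sum fun j d => P.ι d * P.X ^ j) := by
        rw [← Finsupp.mul_sum, ← map_finsuppSum]
    _ = c * P.pi f := by rw [P.sum_coeff]

lemma pi_X_mul (f : A) : P.pi (P.X * f) = 0 := by
  conv_lhs => rw [← P.e_coeff f]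
  unfold e
  rw [Finsupp.mul_sum, map_finsuppSum]
  rw [Finsupp.sum]
  apply Finset.sum_eq_zero
  intro j _
  rw [← mul_assoc, P.X_mul, mul_assoc, ← pow_succ']
  rw [P.pi_monomial]
  simp

lemma pi_mul (f g : A) : P.pi (f * g) = P.pi f * P.pi g := by
  conv_lhs => rw [← P.e_coeff f]
  unfold e
  rw [Finsupp.sum_mul, map_finsuppSum]
  have : ∀ i c, P.pi (P.ι c * P.X ^ i * g) = if i = 0 then c * P.pi g else 0 := by
    intro i c
    cases i with
    | zero => simp [P.pi_iota_mul]
    | succ n =>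
      rw [mul_assoc, P.pi_iota_mul]
      rw [pow_succ', mul_assoc, P.pi_X_mul]
      simp
  calc ((P.coeff f).sum fun i c => P.pi (P.ι c * P.X ^ i * g))
      = (P.coeff f).sum fun i c => if i = 0 then c * P.pi g else 0 :=
        Finsupp.sum_congr fun i _ => this i _
    _ = P.pi f * P.pi g := ?_
  rw [Finsupp.sum]
  rw [Finset.sum_ite_eq' (P.coeff f).support 0 (fun i => P.coeff f i * P.pi g)]
  by_cases h : (0:ℕ) ∈ (P.coeff f).support
  · rw [if_pos h]; rfl
  · simp only [h, if_false]
    have : P.coeff f 0 = 0 := Finsupp.notMem_support_iff.mp h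
    show (0:K) = P.pi f * P.pi g
    rw [show P.pi f = P.coeff f 0 from rfl, this, zero_mul]

lemma pi_one : P.pi 1 = 1 := by
  rw [← map_one P.ι, P.pi_iota]

end SkewPolyRing


open Paper in
/-- For `V` a total valuation ring of the division ring `K`, `σ` an
automorphism of `K` with `σ(V) = V`, `T = V + K[x,σ]x`, and `I` a two-sided ideal
of `T`, the conditions (1) `I ∩ V ≠ 0`, (2) `K[x,σ]x ⊊ I`, (3) `I·K[x,σ] = K[x,σ]`
are equivalent, and if they hold then `I = (I ∩ V) + K[x,σ]x = (I ∩ V)·T`. -/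
theorem stmt0 {K A : Type*} [DivisionRing K] [Ring A] (σ : K ≃+* K)
    (P : SkewPolyRing K σ A) (V : Subring K)
    (hV : ∀ x : K, x ≠ 0 → x ∈ V ∨ x⁻¹ ∈ V)
    (hσV : ∀ a : K, σ a ∈ V ↔ a ∈ V)
    (T : Set A) (hT : T = {f | P.coeff f 0 ∈ V})
    (I : Set A) (hI : IsTwoSidedIdealOf T I) :
    ((∃ a : K, a ≠ 0 ∧ a ∈ V ∧ P.ι a ∈ I) ↔ {f | P.coeff f 0 = 0} ⊂ I) ∧
    ({f | P.coeff f 0 = 0} ⊂ I ↔ setMul I Set.univ = Set.univ) ∧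
    ((∃ a : K, a ≠ 0 ∧ a ∈ V ∧ P.ι a ∈ I) →
      I = {q | ∃ g ∈ I, (∃ v ∈ V, g = P.ι v) ∧ ∃ h : A, P.coeff h 0 = 0 ∧ q = g + h} ∧
      I = setMul (I ∩ {g | ∃ v ∈ V, g = P.ι v}) T) := by
  subst hT
  obtain ⟨hIT, h0I, haddI, hnegI, hmulI⟩ := hI
  set N : Set A := {f | P.coeff f 0 = 0} with hN
  have hπ : ∀ f : A, P.pi f = P.coeff f 0 := fun f => rfl
  have hsum : ∀ (n : ℕ) (g : Fin n → A), (∀ i, g i ∈ I) → (∑ i, g i) ∈ I := by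
    intro n
    induction n with
    | zero => intro g _; simpa using h0I
    | succ m ih =>
      intro g hg
      rw [Fin.sum_univ_succ]
      exact haddI _ (hg 0) _ (ih _ fun i => hg i.succ)
  have hsubI : ∀ f : A, f - P.ι (P.coeff f 0) ∈ N := by
    intro f
    show P.coeff _ 0 = 0
    rw [← hπ, map_sub, P.pi_iota, hπ, sub_self]
  have key : (∃ a : K, a ≠ 0 ∧ a ∈ V ∧ P.ι a ∈ I) → N ⊆ I := by
    rintro ⟨a, ha0, -, haI⟩ f hf
    have hfI : f = P.ι a * (P.ι a⁻¹ * f) := by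
      rw [← mul_assoc, ← map_mul, mul_inv_cancel₀ ha0, map_one, one_mul]
    rw [hfI]
    refine (hmulI _ haI _ ?_).1
    show P.coeff (P.ι a⁻¹ * f) 0 ∈ V
    rw [← hπ, P.pi_mul, P.pi_iota, hπ, hf, mul_zero]
    exact V.zero_mem
  have hconst : N ⊆ I → ∀ f ∈ I, P.ι (P.coeff f 0) ∈ I := by
    intro hNsub f hfI
    have : P.ι (P.coeff f 0) = f + (-(f - P.ι (P.coeff f 0))) := by abel
    rw [this]
    exact haddI _ hfI _ (hnegI _ (hNsub (hsubI f)))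
  have c12 : (∃ a : K, a ≠ 0 ∧ a ∈ V ∧ P.ι a ∈ I) ↔ N ⊂ I := by
    constructor
    · rintro ⟨a, ha0, haV, haI⟩
      refine (Set.ssubset_iff_of_subset (key ⟨a, ha0, haV, haI⟩)).mpr ⟨P.ι a, haI, ?_⟩
      show ¬ (P.coeff (P.ι a) 0 = 0)
      rw [← hπ, P.pi_iota]; exact ha0
    · rintro ⟨hsub, hne⟩
      obtain ⟨f, hfI, hfN⟩ := Set.not_subset.mp hne
      exact ⟨P.coeff f 0, hfN, hIT hfI, hconst hsub f hfI⟩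
  refine ⟨c12, ?_, ?_⟩
  · constructor
    · intro h2
      obtain ⟨a, ha0, haV, haI⟩ := c12.mpr h2
      refine Set.eq_univ_iff_forall.mpr fun q => ?_
      refine ⟨1, fun _ => P.ι a, fun _ => P.ι a⁻¹ * q, fun i => ⟨haI, trivial⟩, ?_⟩
      rw [Fin.sum_univ_one, ← mul_assoc, ← map_mul, mul_inv_cancel₀ ha0, map_one, one_mul]
    · intro h3
      have h1 : (1 : A) ∈ setMul I Set.univ := by rw [h3]; trivial
      obtain ⟨n, x, y, hxy, hone⟩ := h1
      have hNsub : N ⊆ I := by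
        intro f hf
        have hff : f = ∑ i, x i * (y i * f) := by
          conv_lhs => rw [← one_mul f, hone]
          rw [Finset.sum_mul]
          exact Finset.sum_congr rfl fun i _ => (mul_assoc _ _ _)
        rw [hff]
        refine hsum n _ fun i => (hmulI _ (hxy i).1 _ ?_).1
        show P.coeff (y i * f) 0 ∈ V
        rw [← hπ, P.pi_mul, hπ f, hf, mul_zero]
        exact V.zero_mem
      have hex : ∃ i, P.pi (x i) ≠ 0 := by
        by_contra hall
        push_neg at hall
        have h1' : (1 : K) = ∑ i, P.pi (x i) * P.pi (y i) := by
          rw [← P.pi_one, hone, map_sum]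
          exact Finset.sum_congr rfl fun i _ => P.pi_mul _ _
        rw [Finset.sum_congr rfl (fun i _ => by rw [hall i, zero_mul])] at h1'
        simp at h1'
      obtain ⟨i, hi⟩ := hex
      exact (Set.ssubset_iff_of_subset hNsub).mpr ⟨x i, (hxy i).1, hi⟩
  · rintro h1
    obtain ⟨a, ha0, haV, haI⟩ := h1
    have hNsub : N ⊆ I := key ⟨a, ha0, haV, haI⟩
    constructor
    · ext f
      constructor
      · intro hfI
        exact ⟨P.ι (P.coeff f 0), hconst hNsub f hfI, ⟨P.coeff f 0, hIT hfI, rfl⟩,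
          f - P.ι (P.coeff f 0), hsubI f, by abel⟩
      · rintro ⟨g, hgI, -, h, hh, rfl⟩
        exact haddI _ hgI _ (hNsub hh)
    · ext f
      constructor
      · intro hfI
        refine ⟨2, ![P.ι (P.coeff f 0), P.ι a],
          ![1, P.ι a⁻¹ * (f - P.ι (P.coeff f 0))], ?_, ?_⟩
        · intro i
          fin_cases i
          · refine ⟨⟨hconst hNsub f hfI, P.coeff f 0, hIT hfI, rfl⟩, ?_⟩
            show P.coeff (1 : A) 0 ∈ V
            rw [← hπ, P.pi_one]; exact V.one_mem
          · refine ⟨⟨haI, a, haV, rfl⟩, ?_⟩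
            show P.coeff (P.ι a⁻¹ * (f - P.ι (P.coeff f 0))) 0 ∈ V
            rw [← hπ, P.pi_mul, P.pi_iota, hπ, hsubI f, mul_zero]
            exact V.zero_mem
        · rw [Fin.sum_univ_two]
          simp only [Matrix.cons_val_zero, Matrix.cons_val_one, Matrix.head_cons]
          rw [mul_one, ← mul_assoc, ← map_mul, mul_inv_cancel₀ ha0, map_one, one_mul]
          abel
      · rintro ⟨n, x, y, hxy, rfl⟩
        exact hsum n _ fun i => (hmulI _ (hxy i).1.1 _ (hxy i).2).1
end

section
/- Let S be a ν-Bezout order in a division ring D such that S is localizable at every completely prime ideal. If P is a completely prime left PF-prime ideal of S and P' is a completely prime ideal of S with P' ⊆ P, then P' is a left PF-prime ideal of S. -/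
open Paper in
/-- If `S` is a ν-Bezout order in a division ring `D`, localizable at
every completely prime ideal, then every completely prime ideal contained in a
completely prime left PF-prime ideal is again a left PF-prime ideal. -/
theorem stmt5 {D : Type*} [DivisionRing D] (S : Set D) (hS : IsNuBezoutOrder S)
    (hloc : ∀ P : Set D, IsCompletelyPrimeIdealOf S P → IsLocalizableAt S P)
    (P : Set D) (hP : IsCompletelyPrimeIdealOf S P) (hPF : IsLeftPFPrime S P)
    (P' : Set D) (hP' : IsCompletelyPrimeIdealOf S P') (hsub : P' ⊆ P) :
    IsLeftPFPrime S P' := by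
  rintro a ha b hb ha0 hb0 d hd
  obtain ⟨⟨s, hsS, hsd⟩, ⟨t, htS, htd⟩, hmax⟩ := hd
  -- `d ∈ P` by the PF-property of `P`
  have hdP : d ∈ P :=
    hPF a (hsub ha) b (hsub hb) ha0 hb0 d ⟨⟨s, hsS, hsd⟩, ⟨t, htS, htd⟩, hmax⟩
  have hdS : d ∈ S := hP.1.1 hdP
  have hd0 : d ≠ 0 := by
    rintro rfl
    exact ha0 (by rw [hsd, mul_zero])
  by_contra hdP'
  -- then `s, t ∈ P'` by complete primeness of `P'`
  have hsP' : s ∈ P' := by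
    rcases hP'.2.2 s hsS d hdS (hsd ▸ ha) with h | h
    · exact h
    · exact absurd h hdP'
  have htP' : t ∈ P' := by
    rcases hP'.2.2 t htS d hdS (htd ▸ hb) with h | h
    · exact h
    · exact absurd h hdP'
  have hs0 : s ≠ 0 := by
    rintro rfl
    exact ha0 (by rw [hsd, zero_mul])
  have ht0 : t ≠ 0 := by
    rintro rfl
    exact hb0 (by rw [htd, zero_mul])
  -- `1` is an l-gcd of `s` and `t`
  have hgcd1 : IsLGCD S s t 1 := by
    refine ⟨⟨s, hsS, (mul_one s).symm⟩, ⟨t, htS, (mul_one t).symm⟩, ?_⟩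
    rintro c ⟨u, huS, hus⟩ ⟨v, hvS, hvt⟩
    have hdiv : IsLeftDivisor S (c * d) d := by
      refine hmax (c * d) ⟨u, huS, ?_⟩ ⟨v, hvS, ?_⟩
      · rw [hsd, hus, mul_assoc]
      · rw [htd, hvt, mul_assoc]
    obtain ⟨r, hrS, hrd⟩ := hdiv
    have key : (1 - r * c) * d = 0 := by
      have : d = r * c * d := by rw [mul_assoc, ← hrd]
      rw [sub_mul, one_mul, ← this, sub_self]
    have hrc : 1 - r * c = 0 := by
      rcases mul_eq_zero.mp key with h | h
      · exact h
      · exact absurd h hd0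
    exact ⟨r, hrS, sub_eq_zero.mp hrc⟩
  -- hence `1 ∈ P` by the PF-property of `P`, a contradiction
  exact hP.2.1 (hPF s (hsub hsP') t (hsub htP') hs0 ht0 1 hgcd1)
end

section
/- Let S be an order in a simple Artinian ring Q and let A, B be right S-ideals. Then: (1) if A^τ = B^τ then A_ν = B_ν; and (2) if A is a right ν-ideal then A is a right τ-ideal. -/
namespace Paper

variable {Q : Type*} [Ring Q]

lemma subset_nuR (S I : Set Q) : I ⊆ nuR S I := by
  intro x hx b hb
  exact hb x hx

lemma nuR_mono (S : Set Q) {I J : Set Q} (h : I ⊆ J) : nuR S I ⊆ nuR S J := by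
  intro q hq b hb
  exact hq b (fun f hf => hb f (h hf))

lemma colonL_nuR (S I : Set Q) : colonL S (nuR S I) = colonL S I := by
  apply Set.Subset.antisymm
  · intro q hq x hx
    exact hq x (subset_nuR S I hx)
  · intro q hq x hx
    exact hx q hq

lemma nuR_idem (S I : Set Q) : nuR S (nuR S I) = nuR S I := by
  have h := colonL_nuR S I
  unfold nuR at h ⊢
  rw [h]

lemma tauR_subset_nuR (S A : Set Q) : tauR S A ⊆ nuR S A := by
  rintro q ⟨F, _, _, hFA, hq⟩
  exact nuR_mono S hFA hq

lemma subset_tauR (S : Set Q) (hS : IsOrderIn S) (A : Set Q)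
    (hA : IsRightIdealOfOrder S A) : A ⊆ tauR S A := by
  obtain ⟨⟨R, hR⟩, _, _, _⟩ := hS
  have h1 : (1 : Q) ∈ S := hR ▸ R.one_mem
  have h0 : (0 : Q) ∈ S := hR ▸ R.zero_mem
  have hadd : ∀ x ∈ S, ∀ y ∈ S, x + y ∈ S := by
    intro x hx y hy
    rw [← hR] at hx hy ⊢; exact R.add_mem hx hy
  have hneg : ∀ x ∈ S, -x ∈ S := by
    intro x hx; rw [← hR] at hx ⊢; exact R.neg_mem hx
  have hmul : ∀ x ∈ S, ∀ y ∈ S, x * y ∈ S := by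
    intro x hx y hy
    rw [← hR] at hx hy ⊢; exact R.mul_mem hx hy
  obtain ⟨hAsub, ⟨c, hcA, hcS, hcreg⟩, u, hu, huA⟩ := hA
  intro a ha
  set v : Fin 2 → Q := ![a, c] with hv
  set F : Set Q := rightSpan S v with hF
  have memF : ∀ x ∈ F, x ∈ A := by
    rintro x ⟨s, hs, rfl⟩
    rw [Fin.sum_univ_two]
    have h1' : v 0 * s 0 ∈ A := hAsub.2.2.2 _ ha _ (hs 0)
    have h2' : v 1 * s 1 ∈ A := hAsub.2.2.2 _ hcA _ (hs 1)
    exact hAsub.2.1 _ h1' _ h2'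
  have haF : a ∈ F := by
    refine ⟨![1, 0], ?_, ?_⟩
    · intro i; fin_cases i <;> simpa using ‹_›
    · simp [Fin.sum_univ_two, hv]
  have hcF : c ∈ F := by
    refine ⟨![0, 1], ?_, ?_⟩
    · intro i; fin_cases i <;> simpa using ‹_›
    · simp [Fin.sum_univ_two, hv]
  have hFsub : IsRightSubmodule S F := by
    refine ⟨⟨fun _ => 0, fun i => h0, by simp⟩, ?_, ?_, ?_⟩
    · rintro x ⟨s, hs, rfl⟩ y ⟨t, ht, rfl⟩
      refine ⟨fun i => s i + t i, fun i => hadd _ (hs i) _ (ht i), ?_⟩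
      rw [← Finset.sum_add_distrib]
      exact Finset.sum_congr rfl fun i _ => (mul_add _ _ _).symm
    · rintro x ⟨s, hs, rfl⟩
      refine ⟨fun i => -s i, fun i => hneg _ (hs i), ?_⟩
      rw [← Finset.sum_neg_distrib]
      exact Finset.sum_congr rfl fun i _ => (mul_neg _ _).symm
    · rintro x ⟨s, hs, rfl⟩ t ht
      refine ⟨fun i => s i * t, fun i => hmul _ (hs i) _ ht, ?_⟩
      rw [Finset.sum_mul]
      exact Finset.sum_congr rfl fun i _ => (mul_assoc _ _ _)
  have hFid : IsRightIdealOfOrder S F := by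
    refine ⟨hFsub, ⟨c, hcF, hcS, hcreg⟩, u, hu, ?_⟩
    rintro x ⟨s, hs, rfl⟩
    rw [Finset.mul_sum]
    have : ∀ i ∈ Finset.univ, u * (v i * s i) ∈ S := by
      intro i _
      rw [← mul_assoc]
      refine hmul _ ?_ _ (hs i)
      fin_cases i
      · exact huA a ha
      · exact huA c hcA
    rw [← hR] at this ⊢
    exact sum_mem (fun i hi => this i hi)
  exact ⟨F, hFid, ⟨2, v, rfl⟩, memF, subset_nuR S F haF⟩

end Paper

open Paper in
/-- For right `S`-ideals `A, B` of an order `S` in a simple Artinian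
ring `Q`: (1) `A^τ = B^τ` implies `A_ν = B_ν`; (2) if `A` is a right ν-ideal then
`A` is a right τ-ideal. -/
theorem stmt8 {Q : Type*} [Ring Q] [IsSimpleRing Q] [IsArtinianRing Q]
    (S : Set Q) (hS : IsOrderIn S) (A B : Set Q)
    (hA : IsRightIdealOfOrder S A) (hB : IsRightIdealOfOrder S B) :
    (tauR S A = tauR S B → nuR S A = nuR S B) ∧
    (nuR S A = A → tauR S A = A) := by
  have key : ∀ C : Set Q, IsRightIdealOfOrder S C → nuR S (tauR S C) = nuR S C := by
    intro C hC
    apply Set.Subset.antisymm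
    · calc nuR S (tauR S C) ⊆ nuR S (nuR S C) := nuR_mono S (tauR_subset_nuR S C)
        _ = nuR S C := nuR_idem S C
    · exact nuR_mono S (subset_tauR S hS C hC)
  constructor
  · intro h
    rw [← key A hA, ← key B hB, h]
  · intro h
    refine Set.Subset.antisymm ?_ (subset_tauR S hS A hA)
    have h2 := tauR_subset_nuR S A
    rwa [h] at h2
end

section
/- Every right Prüfer order S in a simple Artinian ring Q is a right Prüfer ν-multiplication order. -/
open Paper in
/-- Every right Prüfer order in a simple Artinian ring is a right
Prüfer ν-multiplication order. -/
theorem stmt18 {Q : Type*} [Ring Q] [IsSimpleRing Q] [IsArtinianRing Q]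
    (S : Set Q) (hS : IsOrderIn S) (hP : IsRightPruferOrder S) :
    IsRightPruferNuMultOrder S := by
  obtain ⟨⟨R, hR⟩, -, -, -⟩ := hS
  have hone : (1 : Q) ∈ S := by rw [← hR]; exact R.one_mem
  have hmul : ∀ x ∈ S, ∀ y ∈ S, x * y ∈ S := by
    intro x hx y hy
    rw [← hR] at hx hy ⊢
    exact R.mul_mem hx hy
  have hsum : ∀ {n : ℕ} (f : Fin n → Q), (∀ i, f i ∈ S) → (∑ i, f i) ∈ S := by
    intro n f hf
    rw [← hR]
    exact Subring.sum_mem R fun i _ => show f i ∈ (R : Set Q) by rw [hR]; exact hf i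
  have hSsub : IsRightSubmodule S S := by
    refine ⟨by rw [← hR]; exact R.zero_mem, ?_, ?_, hmul⟩
    · intro x hx y hy; rw [← hR] at hx hy ⊢; exact R.add_mem hx hy
    · intro x hx; rw [← hR] at hx ⊢; exact R.neg_mem hx
  have hSideal : IsRightIdealOfOrder S S :=
    ⟨hSsub, ⟨1, hone, hone, one_mem _⟩, ⟨1, isUnit_one, fun x hx => by rwa [one_mul]⟩⟩
  have hSfg : IsFGRight S S := by
    refine ⟨1, fun _ => (1 : Q), ?_⟩
    ext q
    constructor
    · intro hq
      exact ⟨fun _ => q, fun _ => hq, by simp⟩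
    · rintro ⟨s, hs, rfl⟩
      simpa using hs 0
  have hnuSS : ∀ q ∈ S, q ∈ nuR S S := by
    intro q hq b hb
    have hb' : b ∈ S := by have := hb 1 hone; rwa [one_mul] at this
    exact hmul q hq b hb'
  have htau : tauR S S = S := by
    apply Set.Subset.antisymm
    · rintro q ⟨F, hF, hFfg, hFS, hq⟩
      have h1 : (1 : Q) ∈ colonL S F := fun b hb => by rw [mul_one]; exact hFS hb
      have := hq 1 h1
      rwa [mul_one] at this
    · intro s hs
      exact ⟨S, hSideal, hSfg, Set.Subset.rfl, hnuSS s hs⟩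
  intro I hI
  obtain ⟨hIideal, J, hJideal, hJfg, rfl⟩ := hI
  obtain ⟨h1, h2⟩ := hP J hJideal hJfg
  have hJI : J ⊆ nuR S J := fun z hz b hb => hb z hz
  have hIC : ∀ p ∈ nuR S J, ∀ x ∈ colonL S J, p * x ∈ S := fun p hp x hx => hp x hx
  have hCS : ∀ x ∈ colonL S J, ∀ s ∈ S, x * s ∈ colonL S J := by
    intro x hx s hs b hb
    rw [← mul_assoc]
    exact hmul _ (hx b hb) _ hs
  have hCol : colonL S (nuR S J) = colonL S J := by
    apply Set.Subset.antisymm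
    · intro x hx b hb
      exact hx b (hJI hb)
    · intro x hx p hp
      exact hp x hx
  have hone_CJ : (1 : Q) ∈ setMul (colonL S J) J := by rw [h1]; exact hone
  have hone_JC : (1 : Q) ∈ setMul J (colonL S J) := by
    rw [h2]
    intro x hx
    rwa [one_mul]
  have hK : setMul (colonL S J) (nuR S J) = S := by
    apply Set.Subset.antisymm
    · rintro q ⟨n, x, y, hxy, rfl⟩
      refine hsum _ fun i => ?_
      obtain ⟨m, a, b, hab, heq⟩ := hone_CJ
      have hxi : x i * y i = ∑ j, (x i * (y i * a j)) * b j := by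
        calc x i * y i = x i * y i * 1 := by rw [mul_one]
        _ = x i * y i * ∑ j, a j * b j := by rw [← heq]
        _ = ∑ j, (x i * (y i * a j)) * b j := by
            rw [Finset.mul_sum]
            exact Finset.sum_congr rfl fun j _ => by simp [mul_assoc]
      rw [hxi]
      refine hsum _ fun j => ?_
      have hterm : (x i * (y i * a j)) * b j ∈ setMul (colonL S J) J := by
        refine ⟨1, fun _ => x i * (y i * a j), fun _ => b j, fun _ => ⟨?_, (hab j).2⟩, by simp⟩
        exact hCS _ (hxy i).1 _ (hIC _ (hxy i).2 _ (hab j).1)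
      rw [h1] at hterm
      exact hterm
    · intro s hs
      rw [← h1] at hs
      obtain ⟨n, x, y, hxy, rfl⟩ := hs
      exact ⟨n, x, y, fun i => ⟨(hxy i).1, hJI (hxy i).2⟩, rfl⟩
  have hL : setMul (nuR S J) (colonL S J) = S := by
    apply Set.Subset.antisymm
    · rintro q ⟨n, x, y, hxy, rfl⟩
      exact hsum _ fun i => hIC _ (hxy i).1 _ (hxy i).2
    · intro s hs
      obtain ⟨n, z, w, hzw, heq⟩ := hone_JC
      refine ⟨n, z, fun j => w j * s, fun j => ⟨hJI (hzw j).1, hCS _ (hzw j).2 _ hs⟩, ?_⟩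
      calc s = 1 * s := (one_mul s).symm
      _ = (∑ j, z j * w j) * s := by rw [← heq]
      _ = ∑ j, z j * (w j * s) := by
          rw [Finset.sum_mul]
          exact Finset.sum_congr rfl fun j _ => by rw [mul_assoc]
  have hOl : Ol (nuR S J) = S := by
    apply Set.Subset.antisymm
    · intro q hq
      obtain ⟨n, z, w, hzw, heq⟩ := hone_JC
      have hq1 : q = ∑ j, (q * z j) * w j := by
        calc q = q * 1 := (mul_one q).symm
        _ = q * ∑ j, z j * w j := by rw [← heq]
        _ = ∑ j, (q * z j) * w j := by
            rw [Finset.mul_sum]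
            exact Finset.sum_congr rfl fun j _ => by rw [mul_assoc]
      rw [hq1]
      exact hsum _ fun j => hIC _ (hq _ (hJI (hzw j).1)) _ (hzw j).2
    · intro s hs p hp x hx
      rw [mul_assoc]
      exact hmul _ hs _ (hp x hx)
  exact ⟨by rw [hCol, hK, htau], by rw [hCol, hL, htau, hOl]⟩
end
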